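/- Let p be a prime, δ = p^{−1/(p−1)}, and let F be a field of characteristic zero equipped with a multiplicative nonarchimedean absolute value ‖·‖ (satisfying ‖x+y‖ ≤ max(‖x‖,‖y‖)) whose restriction to ℚ is the p-adic absolute value, so ‖(p:F)‖ = p^{−1}. Let α₁, …, α_s ∈ F be distinct, let n = (n₁, …, n_s) ∈ ℕ^s with N = n₁+⋯+n_s ≥ 1, and let i ∈ {1, …, s}. Then: (a) ‖P_n(α_i)‖ ≤ p²·N·∏_{k=1}^s max(‖α_i − α_k‖, δ)^{n_k}; (b) if moreover ‖α_i − α_k‖ ≤ 1 for all k = 1, …, s, then ‖P_n(α_i)‖ ≤ ‖(n_i! : F)‖. -/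

import Mathlib

open Polynomial

/-- `f_m(z) = ∏ₖ (z − αₖ)^{mₖ}`. -/
noncomputable def fpoly {F : Type*} [Field F] {s : ℕ} (α : Fin s → F) (m : Fin s → ℕ) :
    F[X] := ∏ k, (X - C (α k)) ^ m k

/-- `P_m(z) = Σ_{j=0}^{M} f_m^{(j)}(z)`, the sum of `f_m` and all its derivatives. -/
noncomputable def Ppoly {F : Type*} [Field F] {s : ℕ} (α : Fin s → F) (m : Fin s → ℕ) :
    F[X] := ∑ j ∈ Finset.range (∑ k, m k + 1), derivative^[j] (fpoly α m)

section Aux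

variable {F : Type*} [NormedField F]

lemma na_sub {F : Type*} [NormedField F] (hna : ∀ x y : F, ‖x + y‖ ≤ max ‖x‖ ‖y‖)
    (x y : F) : ‖x - y‖ ≤ max ‖x‖ ‖y‖ := by
  rw [sub_eq_add_neg]
  simpa using hna x (-y)

lemma na_sum_le {ι : Type*} (hna : ∀ x y : F, ‖x + y‖ ≤ max ‖x‖ ‖y‖)
    (a : ι → F) (C : ℝ) (hC : 0 ≤ C) :
    ∀ S : Finset ι, (∀ j ∈ S, ‖a j‖ ≤ C) → ‖∑ j ∈ S, a j‖ ≤ C := by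
  intro S
  induction S using Finset.cons_induction with
  | empty => intro _; simpa using hC
  | cons x S hx IH =>
    intro h
    rw [Finset.sum_cons]
    exact (hna _ _).trans (max_le (h x (Finset.mem_cons_self x S))
      (IH fun j hj => h j (Finset.mem_cons_of_mem hj)))

lemma na_coeff_linear_mul (hna : ∀ x y : F, ‖x + y‖ ≤ max ‖x‖ ‖y‖)
    {d : ℝ} (hd : 0 < d) (t : F) (q : F[X]) (Cq : ℝ) (hCq : 0 ≤ Cq)
    (hq : ∀ m, ‖q.coeff m‖ ≤ Cq * d⁻¹ ^ m) (m : ℕ) :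
    ‖((X - C t) * q).coeff m‖ ≤ (max ‖t‖ d * Cq) * d⁻¹ ^ m := by
  have hcoeff : ((X - C t) * q) = X * q - C t * q := by ring
  have hdinv : (0:ℝ) ≤ d⁻¹ ^ m := by positivity
  cases m with
  | zero =>
    rw [hcoeff, Polynomial.coeff_sub, Polynomial.mul_coeff_zero, Polynomial.coeff_X_zero,
      zero_mul, zero_sub, norm_neg, Polynomial.coeff_C_mul, norm_mul, pow_zero, mul_one]
    calc ‖t‖ * ‖q.coeff 0‖ ≤ ‖t‖ * Cq := by
          refine mul_le_mul_of_nonneg_left ?_ (norm_nonneg t)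
          simpa using hq 0
      _ ≤ max ‖t‖ d * Cq := mul_le_mul_of_nonneg_right (le_max_left _ _) hCq
  | succ m =>
    rw [hcoeff, Polynomial.coeff_sub, Polynomial.coeff_X_mul, Polynomial.coeff_C_mul]
    refine (na_sub hna _ _).trans (max_le ?_ ?_)
    · have h1 : ‖q.coeff m‖ ≤ Cq * d⁻¹ ^ m := hq m
      have h2 : Cq * d⁻¹ ^ m = d * (Cq * d⁻¹ ^ (m+1)) := by
        field_simp
        ring_nf
        rw [mul_inv_cancel_right₀ hd.ne']
      have h3 : d * (Cq * d⁻¹ ^ (m+1)) ≤ max ‖t‖ d * (Cq * d⁻¹ ^ (m+1)) :=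
        mul_le_mul_of_nonneg_right (le_max_right _ _) (by positivity)
      calc ‖q.coeff m‖ ≤ d * (Cq * d⁻¹ ^ (m+1)) := by rw [← h2]; exact h1
        _ ≤ max ‖t‖ d * (Cq * d⁻¹ ^ (m+1)) := h3
        _ = (max ‖t‖ d * Cq) * d⁻¹ ^ (m+1) := by ring
    · rw [norm_mul]
      calc ‖t‖ * ‖q.coeff (m+1)‖ ≤ ‖t‖ * (Cq * d⁻¹ ^ (m+1)) :=
            mul_le_mul_of_nonneg_left (hq (m+1)) (norm_nonneg t)
        _ ≤ max ‖t‖ d * (Cq * d⁻¹ ^ (m+1)) :=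
            mul_le_mul_of_nonneg_right (le_max_left _ _) (by positivity)
        _ = (max ‖t‖ d * Cq) * d⁻¹ ^ (m+1) := by ring

lemma na_coeff_pow_mul (hna : ∀ x y : F, ‖x + y‖ ≤ max ‖x‖ ‖y‖)
    {d : ℝ} (hd : 0 < d) (t : F) (k : ℕ) :
    ∀ (q : F[X]) (Cq : ℝ), 0 ≤ Cq → (∀ m, ‖q.coeff m‖ ≤ Cq * d⁻¹ ^ m) →
    ∀ m, ‖((X - C t) ^ k * q).coeff m‖ ≤ (max ‖t‖ d ^ k * Cq) * d⁻¹ ^ m := by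
  induction k with
  | zero => intro q Cq h0 hq m; simpa using hq m
  | succ k IH =>
    intro q Cq h0 hq m
    have e1 : (X - C t) ^ (k+1) * q = (X - C t) * ((X - C t) ^ k * q) := by ring
    have hmax : (0:ℝ) ≤ max ‖t‖ d ^ k * Cq :=
      mul_nonneg (pow_nonneg (le_trans hd.le (le_max_right _ _)) _) h0
    have hb := na_coeff_linear_mul hna hd t ((X - C t) ^ k * q) _ hmax (IH q Cq h0 hq) m
    rw [e1]
    calc ‖((X - C t) * ((X - C t) ^ k * q)).coeff m‖
        ≤ (max ‖t‖ d * (max ‖t‖ d ^ k * Cq)) * d⁻¹ ^ m := hb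
      _ = (max ‖t‖ d ^ (k+1) * Cq) * d⁻¹ ^ m := by ring

lemma na_coeff_prod_mul {ι : Type*} (hna : ∀ x y : F, ‖x + y‖ ≤ max ‖x‖ ‖y‖)
    {d : ℝ} (hd : 0 < d) (β : ι → F) (n : ι → ℕ) (S : Finset ι) :
    ∀ (q : F[X]) (Cq : ℝ), 0 ≤ Cq → (∀ m, ‖q.coeff m‖ ≤ Cq * d⁻¹ ^ m) →
    ∀ m, ‖((∏ k ∈ S, (X - C (β k)) ^ n k) * q).coeff m‖ ≤
      ((∏ k ∈ S, max ‖β k‖ d ^ n k) * Cq) * d⁻¹ ^ m := by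
  induction S using Finset.cons_induction with
  | empty => intro q Cq h0 hq m; simpa using hq m
  | cons a S ha IH =>
    intro q Cq h0 hq m
    have e1 : (∏ k ∈ Finset.cons a S ha, (X - C (β k)) ^ n k) * q
        = (∏ k ∈ S, (X - C (β k)) ^ n k) * ((X - C (β a)) ^ n a * q) := by
      rw [Finset.prod_cons]; ring
    have hmax : (0:ℝ) ≤ max ‖β a‖ d ^ n a * Cq :=
      mul_nonneg (pow_nonneg (le_trans hd.le (le_max_right _ _)) _) h0
    have hb := na_coeff_pow_mul hna hd (β a) (n a) q Cq h0 hq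
    have := IH ((X - C (β a)) ^ n a * q) _ hmax hb m
    rw [e1]
    calc ‖((∏ k ∈ S, (X - C (β k)) ^ n k) * ((X - C (β a)) ^ n a * q)).coeff m‖
        ≤ ((∏ k ∈ S, max ‖β k‖ d ^ n k) * (max ‖β a‖ d ^ n a * Cq)) * d⁻¹ ^ m := this
      _ = ((∏ k ∈ Finset.cons a S ha, max ‖β k‖ d ^ n k) * Cq) * d⁻¹ ^ m := by
          rw [Finset.prod_cons]; ring

lemma na_coeff_one {d : ℝ} (hd : 0 < d) (m : ℕ) :
    ‖(1 : F[X]).coeff m‖ ≤ 1 * d⁻¹ ^ m := by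
  rw [Polynomial.coeff_one, one_mul]
  split_ifs with h
  · subst h; simp
  · simp only [norm_zero]; positivity

lemma na_coeff_prod {ι : Type*} (hna : ∀ x y : F, ‖x + y‖ ≤ max ‖x‖ ‖y‖)
    {d : ℝ} (hd : 0 < d) (β : ι → F) (n : ι → ℕ) (S : Finset ι) (m : ℕ) :
    ‖(∏ k ∈ S, (X - C (β k)) ^ n k).coeff m‖ ≤
      (∏ k ∈ S, max ‖β k‖ d ^ n k) * d⁻¹ ^ m := by
  have := na_coeff_prod_mul hna hd β n S 1 1 zero_le_one (na_coeff_one hd) m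
  simpa using this

lemma taylor_fpoly {F : Type*} [Field F] {s : ℕ} (α : Fin s → F) (m : Fin s → ℕ) (r : F) :
    Polynomial.taylor r (fpoly α m) = ∏ k, (X - C (α k - r)) ^ m k := by
  rw [fpoly, Polynomial.taylor_apply, Polynomial.prod_comp]
  refine Finset.prod_congr rfl fun k _ => ?_
  rw [Polynomial.pow_comp, Polynomial.sub_comp, Polynomial.X_comp, Polynomial.C_comp, map_sub]
  ring

lemma eval_iterate_derivative {F : Type*} [Field F] (f : F[X]) (r : F) (j : ℕ) :
    ((derivative)^[j] f).eval r = (j.factorial : F) * (Polynomial.taylor r f).coeff j := by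
  rw [Polynomial.taylor_coeff, ← Polynomial.factorial_smul_hasseDeriv]
  simp [nsmul_eq_mul]

/-- Real inequality from Legendre's theorem. -/
lemma factnorm_bound (p : ℕ) (hp : p.Prime) (j : ℕ) (hj : 1 ≤ j) :
    ((p:ℝ) ^ (-(padicValNat p (j.factorial) : ℤ))) ≤
      ((p:ℝ) ^ (-(1:ℝ) / ((p:ℝ) - 1))) ^ j * ((p:ℝ) * j) := by
  haveI : Fact p.Prime := ⟨hp⟩
  have hp1 : (1:ℝ) < p := by exact_mod_cast hp.one_lt
  have hp0 : (0:ℝ) < p := by linarith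
  set v := padicValNat p (j.factorial) with hv
  set sdig := (Nat.digits p j).sum with hs
  set L := Nat.log p j with hL
  have hleg : (p - 1) * v = j - sdig := sub_one_mul_padicValNat_factorial j
  have hsle : sdig ≤ j := Nat.digit_sum_le p j
  have hlen : (Nat.digits p j).length = L + 1 := Nat.digits_len p j hp.one_lt (by omega)
  have hsL : sdig ≤ (p - 1) * (L + 1) := by
    have h1 : (Nat.digits p j).sum ≤ (Nat.digits p j).length * (p - 1) := by
      have := List.sum_le_card_nsmul (Nat.digits p j) (p - 1)
        (fun x hx => by have := Nat.digits_lt_base hp.one_lt hx; omega)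
      simpa [smul_eq_mul] using this
    rw [hlen, Nat.mul_comm] at h1
    exact h1
  have hlegR : ((p:ℝ) - 1) * v = (j:ℝ) - sdig := by
    have h1 : ((p - 1) * v : ℕ) = ((j - sdig : ℕ)) := hleg
    have := congrArg (Nat.cast : ℕ → ℝ) h1
    push_cast [Nat.cast_sub hsle, Nat.cast_sub hp.one_lt.le] at this
    linarith
  -- rewrite everything as rpow
  have hne : (p:ℝ) - 1 ≠ 0 := by linarith
  have hvR : (v:ℝ) = ((j:ℝ) - sdig) / ((p:ℝ) - 1) := by
    rw [eq_div_iff hne]; linarith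
  have key : (-(v:ℝ)) = (-(1:ℝ) / ((p:ℝ) - 1)) * j + (sdig:ℝ) / ((p:ℝ) - 1) := by
    rw [hvR]; ring
  have e1 : ((p:ℝ) ^ (-(v : ℤ))) = (p:ℝ) ^ (-(v:ℝ)) := by
    rw [← Real.rpow_intCast]
    norm_num
  have e2 : ((p:ℝ) ^ (-(1:ℝ) / ((p:ℝ) - 1))) ^ j = (p:ℝ) ^ ((-(1:ℝ) / ((p:ℝ) - 1)) * j) := by
    rw [← Real.rpow_natCast ((p:ℝ) ^ (-(1:ℝ) / ((p:ℝ) - 1))) j, ← Real.rpow_mul hp0.le]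
  rw [e1, e2, key, Real.rpow_add hp0]
  refine mul_le_mul_of_nonneg_left ?_ (Real.rpow_nonneg hp0.le _)
  -- p ^ (sdig/(p-1)) ≤ p * j
  have hexp : (sdig:ℝ) / ((p:ℝ) - 1) ≤ (L:ℝ) + 1 := by
    rw [div_le_iff₀ (by linarith)]
    have : (sdig:ℝ) ≤ ((p:ℝ) - 1) * ((L:ℝ) + 1) := by
      have := (Nat.cast_le (α := ℝ)).2 hsL
      push_cast [Nat.cast_sub hp.one_lt.le] at this
      linarith
    linarith
  calc (p:ℝ) ^ ((sdig:ℝ) / ((p:ℝ) - 1)) ≤ (p:ℝ) ^ ((L:ℝ) + 1) :=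
        Real.rpow_le_rpow_of_exponent_le hp1.le hexp
    _ = (p:ℝ) ^ (L + 1 : ℕ) := by
        rw [← Real.rpow_natCast (p:ℝ) (L+1)]
        push_cast
        ring_nf
    _ = (p:ℝ) * (p:ℝ) ^ L := by ring
    _ ≤ (p:ℝ) * j := by
        refine mul_le_mul_of_nonneg_left ?_ hp0.le
        exact_mod_cast Nat.pow_log_le_self p (by omega : j ≠ 0)

end Aux

/-- Over a characteristic-zero field with a multiplicative
nonarchimedean absolute value restricting to the `p`-adic absolute value on `ℚ`,
with `δ = p^{−1/(p−1)}`: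
(a) `‖P_n(αᵢ)‖ ≤ p² N ∏ₖ max(‖αᵢ−αₖ‖, δ)^{nₖ}`;
(b) if `‖αᵢ−αₖ‖ ≤ 1` for all `k`, then `‖P_n(αᵢ)‖ ≤ ‖nᵢ!‖`. -/
theorem stmt10 {F : Type*} [NormedField F] [CharZero F]
    (p : ℕ) (hp : p.Prime)
    (hna : ∀ x y : F, ‖x + y‖ ≤ max ‖x‖ ‖y‖)
    (hQ : ∀ q : ℚ, ‖(q : F)‖ = (padicNorm p q : ℝ))
    (δ : ℝ) (hδ : δ = (p : ℝ) ^ (-(1 : ℝ) / ((p : ℝ) - 1)))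
    {s : ℕ} (α : Fin s → F) (hα : Function.Injective α)
    (n : Fin s → ℕ) (N : ℕ) (hN : N = ∑ k, n k) (hN1 : 1 ≤ N)
    (i : Fin s) :
    ‖(Ppoly α n).eval (α i)‖ ≤
        (p : ℝ) ^ 2 * N * ∏ k, max ‖α i - α k‖ δ ^ n k ∧
      ((∀ k, ‖α i - α k‖ ≤ 1) →
        ‖(Ppoly α n).eval (α i)‖ ≤ ‖((n i).factorial : F)‖) := by
  haveI : Fact p.Prime := ⟨hp⟩
  have hp1R : (1:ℝ) < p := by exact_mod_cast hp.one_lt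
  have hp0R : (0:ℝ) < p := by linarith
  have hδ0 : 0 < δ := hδ ▸ Real.rpow_pos_of_pos hp0R _
  -- the nat-cast norm bound
  have hnat : ∀ m : ℕ, ‖(m : F)‖ ≤ 1 := by
    intro m
    have h1 := hQ (m : ℚ)
    rw [Rat.cast_natCast] at h1
    rw [h1]
    exact_mod_cast padicNorm.of_nat m
  -- ‖j!‖ as padic norm
  have hfact : ∀ j : ℕ, ‖(j.factorial : F)‖ = (p:ℝ) ^ (-(padicValNat p j.factorial : ℤ)) := by
    intro j
    have h1 := hQ (j.factorial : ℚ)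
    rw [Rat.cast_natCast] at h1
    rw [h1]
    have hne : ((j.factorial : ℚ)) ≠ 0 := by
      exact_mod_cast j.factorial_ne_zero
    rw [padicNorm.eq_zpow_of_nonzero hne, padicValRat.of_nat]
    push_cast
    rfl
  set β : Fin s → F := fun k => α k - α i with hβ
  have hβnorm : ∀ k, ‖β k‖ = ‖α i - α k‖ := by
    intro k
    simp only [hβ]
    rw [show α k - α i = -(α i - α k) from by ring, norm_neg]
  have hT : Polynomial.taylor (α i) (fpoly α n) = ∏ k, (X - C (β k)) ^ n k :=
    taylor_fpoly α n (α i)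
  -- Ppoly eval as sum
  have hPeval : (Ppoly α n).eval (α i)
      = ∑ j ∈ Finset.range (N + 1), (j.factorial : F) *
          (∏ k, (X - C (β k)) ^ n k).coeff j := by
    rw [Ppoly, Polynomial.eval_finset_sum, ← hN]
    refine Finset.sum_congr rfl fun j _ => ?_
    rw [eval_iterate_derivative, hT]
  set B : ℝ := ∏ k, max ‖α i - α k‖ δ ^ n k with hB
  have hB0 : 0 ≤ B := Finset.prod_nonneg fun k _ =>
    pow_nonneg (le_trans hδ0.le (le_max_right _ _)) _
  constructor
  · -- part (a)
    rw [hPeval]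
    have hC0 : (0:ℝ) ≤ (p : ℝ) ^ 2 * N * B := by positivity
    refine na_sum_le hna _ _ hC0 _ fun j hj => ?_
    have hjN : j ≤ N := by
      simp only [Finset.mem_range] at hj
      omega
    have hcoeff : ‖(∏ k, (X - C (β k)) ^ n k).coeff j‖ ≤ B * δ⁻¹ ^ j := by
      have := na_coeff_prod hna hδ0 β n Finset.univ j
      have heq : (∏ k, max ‖β k‖ δ ^ n k) = B := by
        rw [hB]
        exact Finset.prod_congr rfl fun k _ => by rw [hβnorm k]
      rwa [heq] at this
    have hfj : ‖(j.factorial : F)‖ ≤ δ ^ j * ((p:ℝ) * N) := by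
      rcases Nat.eq_zero_or_pos j with hj0 | hj0
      · subst hj0
        simp only [Nat.factorial_zero, Nat.cast_one, norm_one, pow_zero, one_mul]
        have : (1:ℝ) ≤ (p:ℝ) := hp1R.le
        have hN1R : (1:ℝ) ≤ N := by exact_mod_cast hN1
        nlinarith
      · rw [hfact j]
        calc ((p:ℝ) ^ (-(padicValNat p j.factorial : ℤ)))
            ≤ ((p:ℝ) ^ (-(1:ℝ) / ((p:ℝ) - 1))) ^ j * ((p:ℝ) * j) :=
              factnorm_bound p hp j hj0
          _ = δ ^ j * ((p:ℝ) * j) := by rw [hδ]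
          _ ≤ δ ^ j * ((p:ℝ) * N) := by
              gcongr
    have hδδ : δ ^ j * δ⁻¹ ^ j = 1 := by
      rw [← mul_pow, mul_inv_cancel₀ hδ0.ne', one_pow]
    calc ‖(j.factorial : F) * (∏ k, (X - C (β k)) ^ n k).coeff j‖
        = ‖(j.factorial : F)‖ * ‖(∏ k, (X - C (β k)) ^ n k).coeff j‖ := norm_mul _ _
      _ ≤ (δ ^ j * ((p:ℝ) * N)) * (B * δ⁻¹ ^ j) := by
          refine mul_le_mul hfj hcoeff (norm_nonneg _) (by positivity)
      _ = ((p:ℝ) * N * B) * (δ ^ j * δ⁻¹ ^ j) := by ring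
      _ = (p:ℝ) * N * B := by rw [hδδ, mul_one]
      _ ≤ (p:ℝ) ^ 2 * N * B := by
          have hNR : (0:ℝ) ≤ N := by positivity
          nlinarith
  · -- part (b)
    intro hk
    rw [hPeval]
    refine na_sum_le hna _ _ (norm_nonneg _) _ fun j hj => ?_
    -- split off factor i
    have hsplit : (∏ k, (X - C (β k)) ^ n k)
        = (∏ k ∈ Finset.univ.erase i, (X - C (β k)) ^ n k) * X ^ n i := by
      rw [← Finset.mul_prod_erase Finset.univ _ (Finset.mem_univ i)]
      have : β i = 0 := by simp [hβ]
      rw [this]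
      simp [mul_comm]
    rw [hsplit, Polynomial.coeff_mul_X_pow']
    split_ifs with hni
    · -- j ≥ n i
      have hcoeff : ‖(∏ k ∈ Finset.univ.erase i, (X - C (β k)) ^ n k).coeff (j - n i)‖ ≤ 1 := by
        have h1 := na_coeff_prod hna one_pos β n (Finset.univ.erase i) (j - n i)
        have h2 : (∏ k ∈ Finset.univ.erase i, max ‖β k‖ 1 ^ n k) = 1 := by
          refine Finset.prod_eq_one fun k _ => ?_
          have : max ‖β k‖ 1 = 1 := max_eq_right ((hβnorm k) ▸ hk k)
          rw [this, one_pow]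
        rw [h2] at h1
        simpa using h1
      have hfle : ‖(j.factorial : F)‖ ≤ ‖((n i).factorial : F)‖ := by
        obtain ⟨c, hc⟩ := Nat.factorial_dvd_factorial hni
        rw [hc]
        push_cast
        rw [norm_mul]
        calc ‖((n i).factorial : F)‖ * ‖(c : F)‖
            ≤ ‖((n i).factorial : F)‖ * 1 :=
              mul_le_mul_of_nonneg_left (hnat c) (norm_nonneg _)
          _ = ‖((n i).factorial : F)‖ := mul_one _
      calc ‖(j.factorial : F) * (∏ k ∈ Finset.univ.erase i, (X - C (β k)) ^ n k).coeff (j - n i)‖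
          = ‖(j.factorial : F)‖ * ‖(∏ k ∈ Finset.univ.erase i, (X - C (β k)) ^ n k).coeff (j - n i)‖ :=
            norm_mul _ _
        _ ≤ ‖((n i).factorial : F)‖ * 1 :=
            mul_le_mul hfle hcoeff (norm_nonneg _) (norm_nonneg _)
        _ = ‖((n i).factorial : F)‖ := mul_one _
    · simp only [mul_zero, norm_zero]
      exact norm_nonneg _
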